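/- Let φ : PSL(2,ℤ) → ℤ/6 be the homomorphism determined by φ(x) = 3 and φ(y) = 2, where PSL(2,ℤ) = ⟨x, y : x² = y³ = 1⟩. Then each of the four stone monodromies ℙ_□ = yxy, ℙ_○ = xyxyx, ℙ_> = y²x, ℙ_< = xy² is sent by φ to 1 ∈ ℤ/6 (i.e., to an element of order 6). Consequently, if a product of n stone monodromies equals the identity in PSL(2,ℤ), then n is divisible by 6. -/

import Mathlib

open Matrix

instance : Fact (Even (Fintype.card (Fin 2))) := ⟨⟨1, rfl⟩⟩

def xSL : Matrix.SpecialLinearGroup (Fin 2) ℤ :=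
  ⟨!![0, 1; -1, 0], by norm_num [Matrix.det_fin_two_of]⟩

def ySL : Matrix.SpecialLinearGroup (Fin 2) ℤ :=
  ⟨!![0, 1; -1, 1], by norm_num [Matrix.det_fin_two_of]⟩

inductive Stone : Type
  | C | S | R | L
deriving DecidableEq

/-- the stone monodromies as words in x, y inside SL(2,ℤ). -/
def stoneSL : Stone → Matrix.SpecialLinearGroup (Fin 2) ℤ
  | .S => ySL * xSL * ySL
  | .C => xSL * ySL * xSL * ySL * xSL
  | .R => ySL ^ 2 * xSL
  | .L => xSL * ySL ^ 2

/-- sign on SL(2, F2) ≅ S3 -/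
def f2 (A : Matrix.SpecialLinearGroup (Fin 2) (ZMod 2)) : ZMod 2 :=
  if A.1 ∈ [!![1,0;0,1], !![0,1;1,1], !![1,1;1,0]] then 0 else 1

def c0 : List (Matrix (Fin 2) (Fin 2) (ZMod 3)) :=
  [!![0,1;2,0], !![0,2;1,0], !![1,0;0,1], !![1,1;1,2],
   !![1,2;2,2], !![2,0;0,2], !![2,1;1,1], !![2,2;2,1]]

def c1 : List (Matrix (Fin 2) (Fin 2) (ZMod 3)) :=
  [!![0,1;2,2], !![0,2;1,1], !![1,0;2,1], !![1,1;0,1],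
   !![1,2;1,0], !![2,0;1,2], !![2,1;2,0], !![2,2;0,2]]

/-- abelianization map on SL(2, F3), kernel Q8 -/
def f3 (A : Matrix.SpecialLinearGroup (Fin 2) (ZMod 3)) : ZMod 3 :=
  if A.1 ∈ c0 then 0 else if A.1 ∈ c1 then 1 else 2

lemma f2_mul : ∀ A B, f2 (A * B) = f2 A + f2 B := by decide

lemma f3_mul : ∀ A B, f3 (A * B) = f3 A + f3 B := by decide

def red2 := Matrix.SpecialLinearGroup.map (n := Fin 2) (Int.castRingHom (ZMod 2))
def red3 := Matrix.SpecialLinearGroup.map (n := Fin 2) (Int.castRingHom (ZMod 3))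

def h (a : ZMod 2) (b : ZMod 3) : ZMod 6 := 3 * a.val + 4 * b.val

lemma h_add : ∀ a a' b b', h (a + a') (b + b') = h a b + h a' b' := by decide

def φ0 : Matrix.SpecialLinearGroup (Fin 2) ℤ →* Multiplicative (ZMod 6) where
  toFun A := Multiplicative.ofAdd (h (f2 (red2 A)) (f3 (red3 A)))
  map_one' := by
    simp only [_root_.map_one]
    decide
  map_mul' A B := by
    simp only [_root_.map_mul, f2_mul, f3_mul, h_add, ofAdd_add]

lemma φ0_x : φ0 xSL = Multiplicative.ofAdd (3 : ZMod 6) := by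
  show Multiplicative.ofAdd _ = _
  congr 1

lemma φ0_y : φ0 ySL = Multiplicative.ofAdd (2 : ZMod 6) := by
  show Multiplicative.ofAdd _ = _
  congr 1

example : True := trivial

lemma x_sq : xSL * xSL = -1 := by
  ext i j
  fin_cases i <;> fin_cases j <;> rfl

lemma φ0_stone : ∀ s : Stone, φ0 (stoneSL s) = Multiplicative.ofAdd (1 : ZMod 6) := by
  intro s
  cases s <;>
    simp only [stoneSL, _root_.map_mul, _root_.map_pow, φ0_x, φ0_y] <;> decide

lemma φ0_prod (l : List Stone) :
    φ0 ((l.map stoneSL).prod) = Multiplicative.ofAdd ((l.length : ZMod 6)) := by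
  induction l with
  | nil => simp
  | cons a t ih =>
      simp only [List.map_cons, List.prod_cons, _root_.map_mul, φ0_stone, ih,
        List.length_cons, ← ofAdd_add]
      congr 1
      push_cast
      ring

theorem stmt9 :
    ∃ φ : Matrix.SpecialLinearGroup (Fin 2) ℤ →* Multiplicative (ZMod 6),
      φ xSL = Multiplicative.ofAdd 3 ∧ φ ySL = Multiplicative.ofAdd 2 ∧
      (∀ s : Stone, φ (stoneSL s) = Multiplicative.ofAdd 1) ∧
      ∀ l : List Stone,
        ((l.map stoneSL).prod = 1 ∨ (l.map stoneSL).prod = -1) →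
          6 ∣ l.length := by
  refine ⟨φ0, φ0_x, φ0_y, φ0_stone, ?_⟩
  intro l hl
  have h1 : φ0 ((l.map stoneSL).prod) = Multiplicative.ofAdd (0 : ZMod 6) := by
    rcases hl with h | h
    · rw [h, _root_.map_one]; rfl
    · rw [h, ← x_sq, _root_.map_mul, φ0_x]; decide
  rw [φ0_prod] at h1
  have : (l.length : ZMod 6) = 0 := by
    have := Multiplicative.ofAdd.injective h1
    exact this
  exact (ZMod.natCast_eq_zero_iff _ _).mp this
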